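/- Let k ≥ 4 and n > k be integers, and set ℓ = ⌊(k−1)/3⌋. If G is a complete k-partite graph on n vertices in which at least ℓ vertices have degree n−1 (equivalently, at least ℓ of the parts are singletons), then the number of edges of G is at most C(n,2)·(1 − 1/(k−ℓ)) + n. -/

import Mathlib

open Finset

set_option maxHeartbeats 1000000 in
theorem stmt6 {V : Type*} [Fintype V] [DecidableEq V] (G : SimpleGraph V) [DecidableRel G.Adj]
    (n k : ℕ) (hk : 4 ≤ k) (hn : k < n) (hcard : Fintype.card V = n)
    (p : V → Fin k) (hG : ∀ u v : V, G.Adj u v ↔ p u ≠ p v)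
    (hdeg : (k - 1) / 3 ≤ (univ.filter fun v => G.degree v = n - 1).card) :
    (G.edgeFinset.card : ℚ) ≤
      (n.choose 2 : ℚ) * (1 - 1 / ((k : ℚ) - (((k - 1) / 3 : ℕ) : ℚ))) + n := by
  classical
  set ℓ := (k - 1) / 3 with hℓ
  set f : Fin k → ℕ := fun i => (univ.filter fun v => p v = i).card with hf
  have hℓk : 3 * ℓ + 1 ≤ k := by omega
  -- sum of fiber sizes is n
  have hsumf : ∑ i, f i = n := by
    rw [← hcard, ← Finset.card_univ]
    exact (Finset.card_eq_sum_card_fiberwise (fun v _ => Finset.mem_univ (p v))).symm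
  -- degree plus own fiber size is n
  have hdegf : ∀ v, G.degree v + f (p v) = n := by
    intro v
    have h1 : G.degree v = (univ.filter fun u => ¬ p u = p v).card := by
      rw [SimpleGraph.degree, SimpleGraph.neighborFinset_eq_filter]
      congr 1
      apply Finset.filter_congr
      intro u _
      simp [hG, ne_comm]
    rw [h1, hf, add_comm]
    simpa [hcard] using
      Finset.card_filter_add_card_filter_not (s := (univ : Finset V))
        (p := fun u => p u = p v)
  -- sum over vertices of fiber sizes equals sum of squares
  have hsq : ∑ v : V, f (p v) = ∑ i, f i * f i := by
    rw [← Finset.sum_fiberwise' univ p f]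
    refine Finset.sum_congr rfl fun i _ => ?_
    rw [Finset.sum_const, smul_eq_mul, hf]
  -- handshake
  have key : 2 * G.edgeFinset.card + ∑ i, f i * f i = n * n := by
    have h2 : ∑ v : V, (G.degree v + f (p v)) = n * n := by
      rw [Finset.sum_congr rfl fun v _ => hdegf v, Finset.sum_const, smul_eq_mul,
        Finset.card_univ, hcard]
    rw [Finset.sum_add_distrib, G.sum_degrees_eq_twice_card_edges, hsq] at h2
    exact h2
  -- singleton parts
  set S := univ.filter fun v => G.degree v = n - 1 with hS
  have hfS : ∀ v ∈ S, f (p v) = 1 := by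
    intro v hv
    have h1 := hdegf v
    have hv' : G.degree v = n - 1 := by simpa [hS] using hv
    omega
  have hinj : Set.InjOn p S := by
    intro u hu v hv huv
    by_contra hne
    have h1 : f (p u) = 1 := hfS u hu
    have hsub : ({u, v} : Finset V) ⊆ univ.filter fun w => p w = p u := by
      intro w hw
      simp only [Finset.mem_insert, Finset.mem_singleton] at hw
      rcases hw with rfl | rfl <;> simp [huv]
    have h2 := Finset.card_le_card hsub
    rw [Finset.card_insert_of_notMem (by simpa using hne), Finset.card_singleton] at h2
    have h1' : (univ.filter fun w => p w = p u).card = 1 := h1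
    omega
  have hT : ℓ ≤ (S.image p).card := by
    rwa [Finset.card_image_of_injOn hinj]
  obtain ⟨T, hTsub, hTcard⟩ := Finset.exists_subset_card_eq hT
  have hfT : ∀ i ∈ T, f i = 1 := by
    intro i hi
    obtain ⟨v, hv, rfl⟩ := Finset.mem_image.1 (hTsub hi)
    exact hfS v hv
  -- split sums over T and its complement
  have hTu : T ⊆ (univ : Finset (Fin k)) := Finset.subset_univ T
  have hsplit1 : ∑ i ∈ univ \ T, f i + ∑ i ∈ T, f i = n := by
    rw [Finset.sum_sdiff hTu, hsumf]
  have hsplit2 : ∑ i ∈ univ \ T, f i * f i + ∑ i ∈ T, f i * f i = ∑ i, f i * f i := by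
    rw [Finset.sum_sdiff hTu]
  have hsumT : ∑ i ∈ T, f i = ℓ := by
    rw [Finset.sum_const_nat hfT, hTcard, Nat.mul_one]
  have hsumT2 : ∑ i ∈ T, f i * f i = ℓ := by
    rw [Finset.sum_const_nat (m := 1) (fun i hi => by rw [hfT i hi]), hTcard, Nat.mul_one]
  have hcardc : (univ \ T).card = k - ℓ := by
    rw [Finset.card_sdiff_of_subset hTu, Finset.card_univ, Fintype.card_fin, hTcard]
  have hsumc : ∑ i ∈ univ \ T, f i = n - ℓ := by omega
  have hℓn : ℓ ≤ n := by omega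
  have hs1 : (∑ i ∈ univ \ T, ((f i : ℚ))) = (n : ℚ) - (ℓ : ℚ) := by
    rw [← Nat.cast_sum, hsumc, Nat.cast_sub hℓn]
  have hs2 : (∑ i ∈ univ \ T, ((f i : ℚ)) ^ 2) = ((∑ i, f i * f i : ℕ) : ℚ) - (ℓ : ℚ) := by
    have hmm : ∑ i ∈ univ \ T, f i * f i = ∑ i, f i * f i - ℓ := by omega
    calc ∑ i ∈ univ \ T, ((f i : ℚ)) ^ 2
        = ((∑ i ∈ univ \ T, f i * f i : ℕ) : ℚ) := by
          rw [Nat.cast_sum]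
          exact Finset.sum_congr rfl fun i _ => by push_cast; ring
      _ = _ := by rw [hmm, Nat.cast_sub (by omega)]
  have hCS := sq_sum_le_card_mul_sum_sq (s := univ \ T) (f := fun i => ((f i : ℚ)))
  rw [hcardc, hs1, hs2] at hCS
  have hkℓ : ((k - ℓ : ℕ) : ℚ) = (k : ℚ) - (ℓ : ℚ) := by
    rw [Nat.cast_sub (by omega : ℓ ≤ k)]
  rw [hkℓ] at hCS
  have hkey : 2 * (G.edgeFinset.card : ℚ) + ((∑ i, f i * f i : ℕ) : ℚ) = n * n := by
    exact_mod_cast congrArg (Nat.cast : ℕ → ℚ) key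
  have hM : (2 : ℚ) ≤ (k : ℚ) - (ℓ : ℚ) - 2 * ℓ + 1 := by
    have : (3 * ℓ + 1 : ℚ) ≤ (k : ℚ) := by exact_mod_cast hℓk
    linarith
  have hMpos : (0 : ℚ) < (k : ℚ) - (ℓ : ℚ) := by
    have : (3 * ℓ + 1 : ℚ) ≤ (k : ℚ) := by exact_mod_cast hℓk
    have hℓ0 : (0 : ℚ) ≤ (ℓ : ℚ) := by positivity
    linarith
  have hch : (n.choose 2 : ℚ) = n * (n - 1) / 2 := by rw [Nat.cast_choose_two]
  have hnQ : (k : ℚ) < (n : ℚ) := by exact_mod_cast hn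
  have hℓQ : (0 : ℚ) ≤ (ℓ : ℚ) := by positivity
  have hnQ0 : (0 : ℚ) ≤ (n : ℚ) := by positivity
  have hEQ0 : (0 : ℚ) ≤ (G.edgeFinset.card : ℚ) := by positivity
  have hMne : ((k : ℚ) - (ℓ : ℚ)) ≠ 0 := ne_of_gt hMpos
  have hE2 : 2 * (G.edgeFinset.card : ℚ) * ((k : ℚ) - ℓ) ≤
      ((n : ℚ) * n - ℓ) * ((k : ℚ) - ℓ) - ((n : ℚ) - ℓ) ^ 2 := by
    nlinarith [hCS, hkey, hMpos]
  rw [hch, show (((k - 1) / 3 : ℕ) : ℚ) = (ℓ : ℚ) from rfl, ← sub_nonneg]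
  have expand : (n : ℚ) * (n - 1) / 2 * (1 - 1 / ((k : ℚ) - ℓ)) + n - (G.edgeFinset.card : ℚ)
      = ((((n : ℚ) * (n - 1)) * ((k : ℚ) - ℓ - 1) + 2 * n * ((k : ℚ) - ℓ))
          - 2 * (G.edgeFinset.card : ℚ) * ((k : ℚ) - ℓ)) / (2 * ((k : ℚ) - ℓ)) := by
    field_simp
  rw [expand]
  apply div_nonneg _ (by linarith)
  nlinarith [hE2, hM, hMpos, hnQ, hℓQ, hnQ0,
    mul_nonneg hℓQ hMpos.le,
    mul_nonneg hnQ0 (by linarith : (0:ℚ) ≤ (k : ℚ) - (ℓ : ℚ) - 2 * ℓ + 1)]
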